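/- Let $r \ge 25$, $\delta = 1/(10^4 r^{3/2})$, and $n \ge 10^4 r^3$. Let $G$ be a graph on $n$ vertices with $\delta(G) \ge (1-\delta)n$. Then $\sum_{x \in V(G)} \sum_{y \in N(x)} |N^c(x) \cap N^c(y)| \, k_{r-3} \le n^2 k_{r-2}/(10^5 r^2)$, where $N^c(v)$ denotes the set of non-neighbours of $v$ (including $v$) and $k_s$ the number of $s$-cliques of $G$. -/

import Mathlib

open Finset

private lemma clique_ext_19 {V : Type*} [Fintype V] [DecidableEq V] (G : SimpleGraph V)
    [DecidableRel G.Adj] (s m : ℕ)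
    (hm : ∀ K ∈ G.cliqueFinset s, m ≤ (univ.filter (fun v => ∀ u ∈ K, G.Adj u v)).card) :
    (G.cliqueFinset s).card * m ≤ (s+1) * (G.cliqueFinset (s+1)).card := by
  have key : ∀ K ∈ G.cliqueFinset s,
      (univ.filter (fun v => ∀ u ∈ K, G.Adj u v)).card
        ≤ ((G.cliqueFinset (s+1)).filter (fun L => K ⊆ L)).card := by
    intro K hK
    rw [SimpleGraph.mem_cliqueFinset_iff] at hK
    apply Finset.card_le_card_of_injOn (fun v => insert v K)
    · intro v hv
      simp only [coe_filter, Set.mem_setOf_eq, mem_coe, mem_filter, mem_univ, true_and] at hv ⊢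
      have hvK : v ∉ K := fun h => G.loopless.irrefl v (hv v h)
      constructor
      · rw [SimpleGraph.mem_cliqueFinset_iff]
        exact hK.insert (fun u hu => (hv u hu).symm)
      · exact subset_insert v K
    · intro a ha b hb hab
      simp only [coe_filter, Set.mem_setOf_eq, mem_univ, true_and] at ha hb
      have haK : a ∉ K := fun h => G.loopless.irrefl a (ha a h)
      have hab' : insert a K = insert b K := hab
      have : a ∈ insert b K := hab' ▸ mem_insert_self a K
      rcases mem_insert.mp this with h | h
      · exact h
      · exact absurd h haK
  calc (G.cliqueFinset s).card * m
      = ∑ _K ∈ G.cliqueFinset s, m := by rw [sum_const, smul_eq_mul, mul_comm]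
    _ ≤ ∑ K ∈ G.cliqueFinset s, ((G.cliqueFinset (s+1)).filter (fun L => K ⊆ L)).card := by
        apply sum_le_sum; intro K hK; exact (hm K hK).trans (key K hK)
    _ = ∑ L ∈ G.cliqueFinset (s+1), ((G.cliqueFinset s).filter (fun K => K ⊆ L)).card := by
        simp_rw [card_filter]
        exact sum_comm
    _ = ∑ _L ∈ G.cliqueFinset (s+1), (s+1) := by
        apply sum_congr rfl
        intro L hL
        rw [SimpleGraph.mem_cliqueFinset_iff] at hL
        have : (G.cliqueFinset s).filter (fun K => K ⊆ L) = L.powersetCard s := by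
          ext K
          simp only [mem_filter, SimpleGraph.mem_cliqueFinset_iff, mem_powersetCard]
          constructor
          · rintro ⟨hK, hKL⟩; exact ⟨hKL, hK.card_eq⟩
          · rintro ⟨hKL, hcard⟩
            exact ⟨⟨hL.isClique.subset hKL, hcard⟩, hKL⟩
        rw [this, card_powersetCard, hL.card_eq, Nat.choose_succ_self_right]
    _ = (s+1) * (G.cliqueFinset (s+1)).card := by rw [sum_const, smul_eq_mul, mul_comm]

private lemma swap_bound_19 {V : Type*} [Fintype V] [DecidableEq V] (G : SimpleGraph V)
    [DecidableRel G.Adj]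
    (D : ℕ) (hD : ∀ v, (univ.filter (fun u => ¬ G.Adj v u)).card ≤ D) (x : V) :
    ∑ y ∈ G.neighborFinset x,
      ((univ.filter (fun u => ¬ G.Adj x u)) ∩ (univ.filter (fun u => ¬ G.Adj y u))).card
      ≤ D * D := by
  have step : ∀ y : V,
      ((univ.filter (fun u => ¬ G.Adj x u)) ∩ (univ.filter (fun u => ¬ G.Adj y u))).card
        = ∑ z ∈ univ.filter (fun u => ¬ G.Adj x u), if ¬ G.Adj y z then 1 else 0 := by
    intro y
    rw [← card_filter]
    congr 1
    ext z
    simp only [mem_inter, mem_filter, mem_univ, true_and]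
  calc ∑ y ∈ G.neighborFinset x,
        ((univ.filter (fun u => ¬ G.Adj x u)) ∩ (univ.filter (fun u => ¬ G.Adj y u))).card
      = ∑ y ∈ G.neighborFinset x, ∑ z ∈ univ.filter (fun u => ¬ G.Adj x u),
          if ¬ G.Adj y z then 1 else 0 := by simp_rw [step]
    _ = ∑ z ∈ univ.filter (fun u => ¬ G.Adj x u), ∑ y ∈ G.neighborFinset x,
          if ¬ G.Adj y z then 1 else 0 := sum_comm
    _ ≤ ∑ _z ∈ univ.filter (fun u => ¬ G.Adj x u), D := by
        apply sum_le_sum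
        intro z _
        rw [← card_filter]
        calc ((G.neighborFinset x).filter (fun y => ¬ G.Adj y z)).card
            ≤ (univ.filter (fun u => ¬ G.Adj z u)).card := by
              apply card_le_card
              intro y hy
              simp only [mem_filter, mem_univ, true_and] at hy ⊢
              exact fun h => hy.2 h.symm
          _ ≤ D := hD z
    _ = (univ.filter (fun u => ¬ G.Adj x u)).card * D := by rw [sum_const, smul_eq_mul]
    _ ≤ D * D := Nat.mul_le_mul_right D (hD x)

private lemma common_nbhd_19 {V : Type*} [Fintype V] [DecidableEq V] (G : SimpleGraph V)
    [DecidableRel G.Adj]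
    (D s : ℕ) (hD : ∀ v, (univ.filter (fun u => ¬ G.Adj v u)).card ≤ D)
    (K : Finset V) (hK : K.card = s) :
    Fintype.card V ≤ (univ.filter (fun v => ∀ u ∈ K, G.Adj u v)).card + s * D := by
  have hsub : (univ : Finset V) ⊆
      (univ.filter (fun v => ∀ u ∈ K, G.Adj u v)) ∪ K.biUnion (fun u => univ.filter (fun w => ¬ G.Adj u w)) := by
    intro v _
    by_cases h : ∀ u ∈ K, G.Adj u v
    · exact mem_union_left _ (mem_filter.mpr ⟨mem_univ v, h⟩)
    · push_neg at h
      obtain ⟨u, hu, hadj⟩ := h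
      exact mem_union_right _ (mem_biUnion.mpr ⟨u, hu, mem_filter.mpr ⟨mem_univ v, hadj⟩⟩)
  calc Fintype.card V = (univ : Finset V).card := rfl
    _ ≤ ((univ.filter (fun v => ∀ u ∈ K, G.Adj u v)) ∪ K.biUnion (fun u => univ.filter (fun w => ¬ G.Adj u w))).card :=
        card_le_card hsub
    _ ≤ (univ.filter (fun v => ∀ u ∈ K, G.Adj u v)).card + (K.biUnion (fun u => univ.filter (fun w => ¬ G.Adj u w))).card :=
        card_union_le _ _
    _ ≤ (univ.filter (fun v => ∀ u ∈ K, G.Adj u v)).card + ∑ u ∈ K, (univ.filter (fun w => ¬ G.Adj u w)).card := by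
        gcongr
        exact card_biUnion_le
    _ ≤ (univ.filter (fun v => ∀ u ∈ K, G.Adj u v)).card + ∑ _u ∈ K, D := by
        gcongr with u hu
        exact hD u
    _ = (univ.filter (fun v => ∀ u ∈ K, G.Adj u v)).card + s * D := by
        rw [sum_const, smul_eq_mul, hK]

private lemma nc_card_19 {V : Type*} [Fintype V] [DecidableEq V] (G : SimpleGraph V)
    [DecidableRel G.Adj] (v : V) :
    (univ.filter (fun u => ¬ G.Adj v u)).card = Fintype.card V - G.degree v := by
  have h := Finset.card_filter_add_card_filter_not (s := (univ : Finset V))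
    (p := fun u => G.Adj v u)
  have hd : G.degree v = (univ.filter (fun u => G.Adj v u)).card := by
    rw [← SimpleGraph.card_neighborFinset_eq_degree]
    congr 1; ext u; simp
  simp only [Finset.card_univ] at h
  omega

/-- Claim 8.5: the common-non-neighbourhood error term is small. -/
theorem stmt_19 {V : Type*} [Fintype V] [DecidableEq V]
    (r : ℕ) (hr : 25 ≤ r) (G : SimpleGraph V) [DecidableRel G.Adj]
    (hn : 10^4 * r^3 ≤ Fintype.card V)
    (hmin : (1 - 1/(10^4*(r:ℝ)^((3:ℝ)/2))) * (Fintype.card V : ℝ) ≤ (G.minDegree : ℝ)) :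
    ∑ x : V, ∑ y ∈ G.neighborFinset x,
      (((univ.filter (fun u => ¬ G.Adj x u)) ∩ (univ.filter (fun u => ¬ G.Adj y u))).card : ℝ)
        * ((G.cliqueFinset (r-3)).card : ℝ)
      ≤ (Fintype.card V : ℝ)^2 * ((G.cliqueFinset (r-2)).card : ℝ) / (10^5*(r:ℝ)^2) := by
  set n := Fintype.card V with hndef
  have rpos : (0:ℝ) < r := by positivity
  have npos : 0 < n := by
    have : 0 < 10^4 * r^3 := by positivity
    omega
  have hne : Nonempty V := Fintype.card_pos_iff.mp npos
  -- δ basics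
  set δ : ℝ := 1/(10^4*(r:ℝ)^((3:ℝ)/2)) with hδdef
  have hrpow_pos : (0:ℝ) < (r:ℝ)^((3:ℝ)/2) := Real.rpow_pos_of_pos rpos _
  have hδpos : 0 < δ := by positivity
  have hrpow_sq : ((r:ℝ))^((3:ℝ)/2) * (r:ℝ)^((3:ℝ)/2) = (r:ℝ)^3 := by
    rw [← Real.rpow_add rpos]
    norm_num
  have hr_le_rpow : (r:ℝ) ≤ (r:ℝ)^((3:ℝ)/2) := by
    have h1 : (1:ℝ) ≤ (r:ℝ) := by exact_mod_cast (show 1 ≤ r by omega)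
    calc (r:ℝ) = (r:ℝ)^(1:ℝ) := (Real.rpow_one _).symm
      _ ≤ (r:ℝ)^((3:ℝ)/2) := Real.rpow_le_rpow_of_exponent_le h1 (by norm_num)
  have hδsq : δ^2 = 1/(10^8*(r:ℝ)^3) := by
    rw [hδdef, div_pow, one_pow, mul_pow,
      show ((r:ℝ)^((3:ℝ)/2))^2 = (r:ℝ)^((3:ℝ)/2) * (r:ℝ)^((3:ℝ)/2) from sq _, hrpow_sq]
    norm_num
  have hδr : δ * r ≤ 1/2 := by
    have : δ * r ≤ δ * (r:ℝ)^((3:ℝ)/2) := by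
      apply mul_le_mul_of_nonneg_left hr_le_rpow hδpos.le
    calc δ * r ≤ δ * (r:ℝ)^((3:ℝ)/2) := this
      _ = 1/10^4 := by rw [hδdef]; field_simp
      _ ≤ 1/2 := by norm_num
  -- minimum degree and non-neighbourhood size
  have hmind_le : G.minDegree ≤ n := by
    obtain ⟨v⟩ := hne
    refine (G.minDegree_le_degree v).trans ?_
    rw [← SimpleGraph.card_neighborFinset_eq_degree]
    exact card_le_univ _
  set D : ℕ := n - G.minDegree with hDdef
  have hD : ∀ v, (univ.filter (fun u => ¬ G.Adj v u)).card ≤ D := by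
    intro v
    rw [nc_card_19]
    have := G.minDegree_le_degree v
    omega
  have hDcast : (D:ℝ) ≤ δ * n := by
    have hc : (D:ℝ) = (n:ℝ) - (G.minDegree : ℝ) := by
      rw [hDdef]; push_cast [Nat.cast_sub hmind_le]; ring
    rw [hc]
    nlinarith [hmin]
  have hDnonneg : (0:ℝ) ≤ (D:ℝ) := by positivity
  -- clique counting
  set s : ℕ := r - 3 with hsdef
  have hs1 : s + 1 = r - 2 := by omega
  have hsD_half : (s:ℝ) * D ≤ (n:ℝ)/2 := by
    have h1 : (s:ℝ) ≤ (r:ℝ) := by exact_mod_cast (show s ≤ r by omega)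
    have h2 : (s:ℝ) * D ≤ (r:ℝ) * (δ * n) := by
      apply mul_le_mul h1 hDcast hDnonneg rpos.le
    calc (s:ℝ) * D ≤ (r:ℝ) * (δ * n) := h2
      _ = (δ * r) * n := by ring
      _ ≤ (1/2) * n := by
          apply mul_le_mul_of_nonneg_right hδr (by positivity)
      _ = (n:ℝ)/2 := by ring
  have hsD_le_n : s * D ≤ n := by
    have : ((s*D : ℕ) : ℝ) ≤ (n:ℝ) := by
      push_cast
      calc (s:ℝ) * D ≤ (n:ℝ)/2 := hsD_half
        _ ≤ n := by linarith [show (0:ℝ) ≤ (n:ℝ) from by positivity]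
    exact_mod_cast this
  set m : ℕ := n - s * D with hmdef
  have hmcast : (n:ℝ)/2 ≤ (m:ℝ) := by
    have : (m:ℝ) = (n:ℝ) - (s:ℝ)*(D:ℝ) := by
      rw [hmdef]; push_cast [Nat.cast_sub hsD_le_n]; ring
    rw [this]
    linarith [hsD_half]
  have hclique : (G.cliqueFinset s).card * m ≤ (s+1) * (G.cliqueFinset (s+1)).card := by
    apply clique_ext_19
    intro K hK
    have hKcard : K.card = s := (SimpleGraph.mem_cliqueFinset_iff.mp hK).card_eq
    have := common_nbhd_19 G D s hD K hKcard
    omega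
  -- notation for clique counts
  set k3 : ℝ := ((G.cliqueFinset (r-3)).card : ℝ) with hk3def
  set k2 : ℝ := ((G.cliqueFinset (r-2)).card : ℝ) with hk2def
  have hk3nonneg : 0 ≤ k3 := by positivity
  have hk2nonneg : 0 ≤ k2 := by positivity
  have hk3m : k3 * (m:ℝ) ≤ (r:ℝ) * k2 := by
    have hcast : (((G.cliqueFinset s).card * m : ℕ) : ℝ) ≤ (((s+1) * (G.cliqueFinset (s+1)).card : ℕ) : ℝ) := by
      exact_mod_cast hclique
    push_cast at hcast
    rw [hs1] at hcast
    have hs1r : ((s:ℝ)+1) ≤ (r:ℝ) := by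
      have : s + 1 ≤ r := by omega
      exact_mod_cast this
    calc k3 * (m:ℝ) = ((G.cliqueFinset s).card : ℝ) * m := by rw [hk3def, hsdef]
      _ ≤ ((s:ℝ)+1) * k2 := hcast
      _ ≤ (r:ℝ) * k2 := by apply mul_le_mul_of_nonneg_right hs1r hk2nonneg
  have hk3half : k3 * ((n:ℝ)/2) ≤ (r:ℝ) * k2 :=
    le_trans (mul_le_mul_of_nonneg_left hmcast hk3nonneg) hk3m
  -- bound the double sum
  set S : ℕ := ∑ x : V, ∑ y ∈ G.neighborFinset x,
      ((univ.filter (fun u => ¬ G.Adj x u)) ∩ (univ.filter (fun u => ¬ G.Adj y u))).card with hSdef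
  have hS : S ≤ n * (D * D) := by
    rw [hSdef]
    calc ∑ x : V, ∑ y ∈ G.neighborFinset x,
          ((univ.filter (fun u => ¬ G.Adj x u)) ∩ (univ.filter (fun u => ¬ G.Adj y u))).card
        ≤ ∑ _x : V, D * D := sum_le_sum (fun x _ => swap_bound_19 G D hD x)
      _ = n * (D * D) := by rw [sum_const, smul_eq_mul, card_univ]
  have hScast : (S:ℝ) ≤ δ^2 * (n:ℝ)^3 := by
    have h1 : (S:ℝ) ≤ (n:ℝ) * ((D:ℝ) * (D:ℝ)) := by exact_mod_cast hS
    have h2 : (D:ℝ) * (D:ℝ) ≤ (δ*n) * (δ*n) := by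
      apply mul_le_mul hDcast hDcast hDnonneg (by positivity)
    calc (S:ℝ) ≤ (n:ℝ) * ((D:ℝ) * (D:ℝ)) := h1
      _ ≤ (n:ℝ) * ((δ*n) * (δ*n)) := by
          apply mul_le_mul_of_nonneg_left h2 (by positivity)
      _ = δ^2 * (n:ℝ)^3 := by ring
  -- rewrite LHS as S * k3
  have hLHS : ∑ x : V, ∑ y ∈ G.neighborFinset x,
      (((univ.filter (fun u => ¬ G.Adj x u)) ∩ (univ.filter (fun u => ¬ G.Adj y u))).card : ℝ)
        * k3 = (S:ℝ) * k3 := by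
    rw [hSdef]
    push_cast
    simp_rw [← sum_mul]
  rw [hLHS]
  -- final arithmetic
  have key : 2 * δ^2 * (r:ℝ) ≤ 1/(10^5*(r:ℝ)^2) := by
    rw [hδsq, show 2 * (1/(10^8*(r:ℝ)^3)) * (r:ℝ) = (2*(r:ℝ))/(10^8*(r:ℝ)^3) from by ring,
      div_le_div_iff₀ (by positivity) (by positivity)]
    nlinarith [pow_pos rpos 3, pow_pos rpos 2]
  calc (S:ℝ) * k3 ≤ (δ^2 * (n:ℝ)^3) * k3 := by
        apply mul_le_mul_of_nonneg_right hScast hk3nonneg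
    _ = (2 * δ^2 * (n:ℝ)^2) * (k3 * ((n:ℝ)/2)) := by ring
    _ ≤ (2 * δ^2 * (n:ℝ)^2) * ((r:ℝ) * k2) := by
        apply mul_le_mul_of_nonneg_left hk3half
        exact mul_nonneg (mul_nonneg (by norm_num) (sq_nonneg δ)) (sq_nonneg _)
    _ = (2 * δ^2 * (r:ℝ)) * ((n:ℝ)^2 * k2) := by ring
    _ ≤ (1/(10^5*(r:ℝ)^2)) * ((n:ℝ)^2 * k2) := by
        apply mul_le_mul_of_nonneg_right key (mul_nonneg (sq_nonneg _) hk2nonneg)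
    _ = (n:ℝ)^2 * k2 / (10^5*(r:ℝ)^2) := by ring
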